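/- Fix d ≥ 2, β₁ > 0, and set p₀(β₁) := 1/(1 + exp(−2dβ₁)). Then for every integer L ≥ 1, every integer n ≥ 2 and every β₂ > 0, the Wells disorder ν_{L,n,β₁,β₂} is stochastically dominated by the product Bernoulli(p₀(β₁)) measure on {0,1}^{Λ_L}: for every nondecreasing function f : {0,1}^{Λ_L} → [0,∞) (with respect to the pointwise partial order), Σ_{r∈{0,1}^{Λ_L}} f(r)·ν_{L,n,β₁,β₂}({r}) ≤ Σ_{r∈{0,1}^{Λ_L}} f(r)·∏_{x∈Λ_L} p₀(β₁)^{r_x}(1−p₀(β₁))^{1−r_x}. -/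

import Mathlib

open MeasureTheory Real

noncomputable section

/-- Vertices of `ℤ^d`. -/
abbrev Vertex (d : ℕ) := Fin d → ℤ

/-- The box `Λ_L = {-L, …, L}^d ⊆ ℤ^d`. -/
def box (d L : ℕ) : Finset (Vertex d) :=
  Fintype.piFinset fun _ : Fin d => Finset.Icc (-(L : ℤ)) (L : ℤ)

/-- The set `E(Λ)` of nearest-neighbour edges with both endpoints in `Λ`; each
unordered edge `{x, x + eᵢ}` is recorded exactly once, as the ordered pair
`(x, x + eᵢ)` (i.e. with the coordinatewise-smaller endpoint first). -/
def edges (d : ℕ) (Λ : Finset (Vertex d)) : Finset (Vertex d × Vertex d) :=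
  (Λ ×ˢ Λ).filter fun p => (∑ i, |p.2 i - p.1 i|) = 1 ∧ ∀ i, p.1 i ≤ p.2 i

/-- Euclidean norm of a lattice point. -/
def euclNorm {d : ℕ} (x : Vertex d) : ℝ := Real.sqrt (∑ i, ((x i : ℝ)) ^ 2)

/-- Sup norm of a lattice point. -/
def supNorm {d : ℕ} (x : Vertex d) : ℕ := Finset.univ.sup fun i => (x i).natAbs

/-- The Villain kernel `v_β`, with the convention `v_0 ≡ 1`. -/
def villainKer (β θ : ℝ) : ℝ :=
  if β = 0 then 1
  else Real.sqrt (2 * π * β) * ∑' k : ℤ, Real.exp (-(β / 2) * (θ - 2 * π * (k : ℝ)) ^ 2)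

/-- Lebesgue measure on `[0, 2π)^ι`. -/
def angleMeasure (ι : Type*) [Fintype ι] : Measure (ι → ℝ) :=
  volume.restrict (Set.univ.pi fun _ => Set.Ico (0 : ℝ) (2 * π))

/-- Extension of a function on (the coercion to a type of) a finset `Λ` to a
function on all of `V`, by zero. -/
def extFun {V : Type*} [DecidableEq V] {α : Type*} [Zero α] (Λ : Finset V) (θ : ↑Λ → α) :
    V → α :=
  fun x => if h : x ∈ Λ then θ ⟨x, h⟩ else 0

/-- The expectation of an observable `f` under the spin system on `Λ ⊆ ℤ^d` whose
density with respect to the product Lebesgue measure on `[0,2π)^Λ` is proportional to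
`∏_{{x,y} ∈ E(Λ)} w_{xy}(θ_x − θ_y)`. -/
def spinExp (d : ℕ) (Λ : Finset (Vertex d)) (w : ↑(edges d Λ) → ℝ → ℝ)
    (f : (Vertex d → ℝ) → ℝ) : ℝ :=
  (∫ θ : ↑Λ → ℝ,
      f (extFun Λ θ) * ∏ e : ↑(edges d Λ), w e (extFun Λ θ e.1.1 - extFun Λ θ e.1.2)
      ∂(angleMeasure ↑Λ)) /
  (∫ θ : ↑Λ → ℝ,
      ∏ e : ↑(edges d Λ), w e (extFun Λ θ e.1.1 - extFun Λ θ e.1.2)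
      ∂(angleMeasure ↑Λ))

/-- Expectation with respect to i.i.d. Bernoulli(p) `{0,1}`-valued random variables
indexed by a finite type `α`. -/
def bernoulliSum {α : Type*} [Fintype α] [DecidableEq α] (p : ℝ) (f : (α → Bool) → ℝ) : ℝ :=
  ∑ ω : α → Bool, (∏ a : α, if ω a then p else 1 - p) * f ω

/-- The two-point observable `cos(θ_0 − θ_x)`. -/
def twoPointObs {d : ℕ} (x : Vertex d) : (Vertex d → ℝ) → ℝ :=
  fun θ => Real.cos (θ 0 - θ x)


/-- A vertex of the extended lattice `ℤ^d_n`: either a lattice vertex `x ∈ ℤ^d`, or the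
`(t+1)`-st of the `n−1` vertices inserted on the edge from `x` to `x + eᵢ` (encoded as
`(x, i, t)` with `t : Fin (n-1)`).  For `n = 1` the extended lattice is `ℤ^d` itself. -/
abbrev ExtVertex (d n : ℕ) := (Fin d → ℤ) ⊕ ((Fin d → ℤ) × Fin d × Fin (n - 1))

/-- The `i`-th unit vector of `ℤ^d`. -/
def unitVec (d : ℕ) (i : Fin d) : Fin d → ℤ := fun j => if j = i then 1 else 0

/-- Adjacency in the extended lattice `ℤ^d_n`: each nearest-neighbour edge
`{x, x + eᵢ}` of `ℤ^d` is subdivided into the path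
`x, (x,i,0), (x,i,1), …, (x,i,n-2), x + eᵢ` of `n` edges. -/
def extAdj (d n : ℕ) : ExtVertex d n → ExtVertex d n → Prop
  | .inl x, .inl y => n = 1 ∧ (∑ i, |y i - x i|) = 1
  | .inl x, .inr (y, i, t) =>
      (x = y ∧ (t : ℕ) = 0) ∨ (x = y + unitVec d i ∧ (t : ℕ) = n - 2)
  | .inr (y, i, t), .inl x =>
      (x = y ∧ (t : ℕ) = 0) ∨ (x = y + unitVec d i ∧ (t : ℕ) = n - 2)
  | .inr (y, i, t), .inr (y', i', t') =>
      y = y' ∧ i = i' ∧ ((t : ℕ) + 1 = (t' : ℕ) ∨ (t' : ℕ) + 1 = (t : ℕ))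

open Classical in
/-- The energy `Σ_{{u,w} ∈ E(Λ)} r_u r_w J_{uw} cos(θ_u − θ_w)` of the XY model on a
finite set `Λ` of vertices of `ℤ^d_n` with conductances `J` and site weights `r`
(each unordered edge `{u,w} ⊆ Λ` is counted once, whence the factor `1/2` in front of
the sum over ordered pairs). -/
def xyEnergy (d n : ℕ) (Λ : Finset (ExtVertex d n)) (J : ExtVertex d n → ExtVertex d n → ℝ)
    (r : ExtVertex d n → ℝ) (θ : ExtVertex d n → ℝ) : ℝ :=
  (1 / 2) * ∑ u ∈ Λ, ∑ w ∈ Λ,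
    if extAdj d n u w then r u * r w * J u w * Real.cos (θ u - θ w) else 0

/-- The partition function `Z_{Λ,J,r}` of the XY model on `Λ ⊆ ℤ^d_n`. -/
def xyZ (d n : ℕ) (Λ : Finset (ExtVertex d n)) (J : ExtVertex d n → ExtVertex d n → ℝ)
    (r : ExtVertex d n → ℝ) : ℝ :=
  ∫ θ : ↑Λ → ℝ, Real.exp (xyEnergy d n Λ J r (extFun Λ θ)) ∂(angleMeasure ↑Λ)

/-- The expectation `⟨f⟩_{Λ,J,r}` of an observable for the XY model on `Λ ⊆ ℤ^d_n`. -/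
def xyExp (d n : ℕ) (Λ : Finset (ExtVertex d n)) (J : ExtVertex d n → ExtVertex d n → ℝ)
    (r : ExtVertex d n → ℝ) (f : (ExtVertex d n → ℝ) → ℝ) : ℝ :=
  (∫ θ : ↑Λ → ℝ, f (extFun Λ θ) * Real.exp (xyEnergy d n Λ J r (extFun Λ θ))
      ∂(angleMeasure ↑Λ)) / xyZ d n Λ J r

/-- The box `Λ_L^n ⊆ ℤ^d_n`: the box `Λ_L ⊆ ℤ^d` together with the vertices inserted
on the edges of `Λ_L`. -/
def extBox (d n L : ℕ) : Finset (ExtVertex d n) :=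
  ((box d L).image Sum.inl) ∪
    ((((box d L) ×ˢ (Finset.univ : Finset (Fin d × Fin (n - 1)))).filter
        fun p => p.1 + unitVec d p.2.1 ∈ box d L).image
      fun p => Sum.inr (p.1, p.2.1, p.2.2))

/-- Conductances of the model `(β₁, nβ₂)`: an edge of `ℤ^d_n` incident to a lattice
vertex gets conductance `β₁`, an edge with no lattice endpoint gets `n β₂`. -/
def mixedJ (d n : ℕ) (β₁ β₂ : ℝ) : ExtVertex d n → ExtVertex d n → ℝ := fun u w =>
  match u, w with
  | .inr _, .inr _ => (n : ℝ) * β₂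
  | _, _ => β₁

/-- A site configuration `r ∈ {0,1}^{Λ_L}` viewed as a weight on the vertices of
`ℤ^d_n`, extended by `1` off `Λ_L` and on all non-lattice vertices.  On an edge
`{x,u}` of `Λ_L^n` with lattice endpoint `x` this produces exactly the factor `r_x`. -/
def boxSiteVal (d n L : ℕ) (r : ↑(box d L) → Bool) : ExtVertex d n → ℝ :=
  fun u => match u with
    | .inl x => if h : x ∈ box d L then (if r ⟨x, h⟩ then 1 else 0) else 1
    | .inr _ => 1

/-- The partition function `Z_{L,n,β₁,β₂,r}`. -/
def wellsZ (d n L : ℕ) (β₁ β₂ : ℝ) (r : ↑(box d L) → Bool) : ℝ :=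
  xyZ d n (extBox d n L) (mixedJ d n β₁ β₂) (boxSiteVal d n L r)

/-- The Wells disorder `ν_{L,n,β₁,β₂}` on `{0,1}^{Λ_L}`. -/
def wellsNu (d n L : ℕ) (β₁ β₂ : ℝ) (r : ↑(box d L) → Bool) : ℝ :=
  wellsZ d n L β₁ β₂ r / ∑ r' : ↑(box d L) → Bool, wellsZ d n L β₁ β₂ r'


open Classical in
/-- Abstract stochastic domination by a Bernoulli product measure, given a uniform
conditional-odds bound. -/
lemma berDom {α : Type*} [Fintype α] [DecidableEq α] (p : ℝ) (hp0 : 0 ≤ p) (hp1 : p ≤ 1)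
    (Z : (α → Bool) → ℝ) (hZ : ∀ r, 0 ≤ Z r)
    (hodds : ∀ (a : α) (r : α → Bool),
      (1 - p) * Z (Function.update r a true) ≤ p * Z (Function.update r a false))
    (f : (α → Bool) → ℝ) (hf0 : ∀ r, 0 ≤ f r)
    (hfmono : ∀ r r' : α → Bool, (∀ x, r x = true → r' x = true) → f r ≤ f r') :
    ∑ r : α → Bool, f r * Z r ≤
      (∑ r : α → Bool, Z r) * ∑ r : α → Bool, f r * ∏ x, (if r x then p else 1 - p) := by
  let bern : Bool → ℝ := fun b => if b then p else 1 - p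
  have hbern0 : ∀ b, 0 ≤ bern b := by
    intro b; cases b <;> simp [bern] <;> linarith
  let Zs : Finset α → (α → Bool) → ℝ :=
    fun s r => ∑ u : α → Bool, if ∀ x ∈ sᶜ, u x = r x then Z u else 0
  have hZsnonneg : ∀ s r, 0 ≤ Zs s r := by
    intro s r
    apply Finset.sum_nonneg
    intro u _
    split <;> [exact hZ u; exact le_rfl]
  let H : Finset α → ℝ :=
    fun s => ∑ r : α → Bool, f r * ((∏ x ∈ s, bern (r x)) * Zs s r)
  -- value at ∅
  have hZs0 : ∀ r, Zs ∅ r = Z r := by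
    intro r
    show (∑ u : α → Bool, if ∀ x ∈ (∅ : Finset α)ᶜ, u x = r x then Z u else 0) = Z r
    rw [Finset.sum_eq_single r]
    · exact if_pos fun x _ => rfl
    · intro u _ hu
      rw [if_neg]
      intro hcond
      exact hu (funext fun x => hcond x (by simp))
    · simp
  have hH0 : H ∅ = ∑ r : α → Bool, f r * Z r := by
    apply Finset.sum_congr rfl
    intro r _
    rw [hZs0, Finset.prod_empty, one_mul]
  -- value at univ
  have hZsU : ∀ r, Zs Finset.univ r = ∑ u : α → Bool, Z u := by
    intro r
    apply Finset.sum_congr rfl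
    intro u _
    exact if_pos fun x hx => absurd hx (by simp)
  have hHU : H Finset.univ =
      (∑ r : α → Bool, Z r) * ∑ r : α → Bool, f r * ∏ x, bern (r x) := by
    show (∑ r : α → Bool, f r * ((∏ x, bern (r x)) * Zs Finset.univ r)) = _
    rw [Finset.mul_sum]
    apply Finset.sum_congr rfl
    intro r _
    rw [hZsU]; ring
  -- the inductive step
  have hstep : ∀ (a : α) (s : Finset α), a ∉ s → H s ≤ H (insert a s) := by
    intro a s ha
    set e := Equiv.funSplitAt a Bool with he
    have hsymm : ∀ (b : Bool) (t : {j // j ≠ a} → Bool) (j : α),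
        e.symm (b, t) j = if h : j = a then b else t ⟨j, h⟩ := by
      intro b t j
      rw [he, Equiv.funSplitAt_symm_apply]
    have hsymm_a : ∀ b t, e.symm (b, t) a = b := by
      intro b t; rw [hsymm]; simp
    have hsymm_ne : ∀ b b' t (j : α), j ≠ a → e.symm (b, t) j = e.symm (b', t) j := by
      intro b b' t j hj; rw [hsymm, hsymm, dif_neg hj, dif_neg hj]
    have hupd : ∀ (b b' : Bool) t, Function.update (e.symm (b, t)) a b' = e.symm (b', t) := by
      intro b b' t
      funext j
      by_cases hj : j = a
      · subst hj; rw [Function.update_self, hsymm_a]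
      · rw [Function.update_of_ne hj, hsymm_ne _ _ _ _ hj]
    -- the reduced condition
    let cond' : ({j // j ≠ a} → Bool) → ({j // j ≠ a} → Bool) → Prop :=
      fun v t => ∀ (x : α) (hx : x ∈ sᶜ) (h : x ≠ a), v ⟨x, h⟩ = t ⟨x, h⟩
    -- splitting Zs s
    have hZsplit : ∀ (b : Bool) t, Zs s (e.symm (b, t)) =
        ∑ v : {j // j ≠ a} → Bool, if cond' v t then Z (e.symm (b, v)) else 0 := by
      intro b t
      show (∑ u : α → Bool, if ∀ x ∈ sᶜ, u x = e.symm (b, t) x then Z u else 0) = _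
      rw [← Equiv.sum_comp e.symm
        (fun u => if ∀ x ∈ sᶜ, u x = e.symm (b, t) x then Z u else 0)]
      rw [Fintype.sum_prod_type, Fintype.sum_bool]
      have key : ∀ (c : Bool) v, (if ∀ x ∈ sᶜ, e.symm (c, v) x = e.symm (b, t) x
            then Z (e.symm (c, v)) else 0) =
          if c = b then (if cond' v t then Z (e.symm (c, v)) else 0) else 0 := by
        intro c v
        by_cases hcb : c = b
        · subst hcb
          rw [if_pos rfl]
          by_cases hc : cond' v t
          · rw [if_pos, if_pos hc]
            intro x hx
            by_cases hxa : x = a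
            · subst hxa; rw [hsymm_a, hsymm_a]
            · rw [hsymm, hsymm, dif_neg hxa, dif_neg hxa]
              exact hc x hx hxa
          · rw [if_neg, if_neg hc]
            intro hall
            apply hc
            intro x hx hxa
            have := hall x hx
            rw [hsymm, hsymm, dif_neg hxa, dif_neg hxa] at this
            exact this
        · rw [if_neg hcb, if_neg]
          intro hall
          have := hall a (by simpa using ha)
          rw [hsymm_a, hsymm_a] at this
          exact hcb this
      simp only [key]
      cases b
      · simp
      · simp
    -- splitting Zs (insert a s)
    have hZinsert : ∀ (b : Bool) t, Zs (insert a s) (e.symm (b, t)) =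
        Zs s (e.symm (false, t)) + Zs s (e.symm (true, t)) := by
      intro b t
      rw [hZsplit, hZsplit]
      show (∑ u : α → Bool,
          if ∀ x ∈ (insert a s)ᶜ, u x = e.symm (b, t) x then Z u else 0) = _
      rw [← Equiv.sum_comp e.symm
        (fun u => if ∀ x ∈ (insert a s)ᶜ, u x = e.symm (b, t) x then Z u else 0)]
      rw [Fintype.sum_prod_type, Fintype.sum_bool, ← Finset.sum_add_distrib, ← Finset.sum_add_distrib]
      apply Finset.sum_congr rfl
      intro v _
      have key : ∀ c : Bool, (if ∀ x ∈ (insert a s)ᶜ, e.symm (c, v) x = e.symm (b, t) x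
            then Z (e.symm (c, v)) else 0) =
          if cond' v t then Z (e.symm (c, v)) else 0 := by
        intro c
        congr 1
        apply propext
        constructor
        · intro hall x hx hxa
          have hx' : x ∈ (insert a s)ᶜ := by
            rw [Finset.compl_insert, Finset.mem_erase]; exact ⟨hxa, hx⟩
          have := hall x hx'
          rw [hsymm, hsymm, dif_neg hxa, dif_neg hxa] at this
          exact this
        · intro hc x hx
          rw [Finset.compl_insert, Finset.mem_erase] at hx
          rw [hsymm, hsymm, dif_neg hx.1, dif_neg hx.1]
          exact hc x hx.2 hx.1
      rw [key true, key false, add_comm]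
    -- products over s do not see the value at a
    have hprod : ∀ (b : Bool) t, (∏ x ∈ s, bern (e.symm (b, t) x)) =
        ∏ x ∈ s, bern (e.symm (false, t) x) := by
      intro b t
      apply Finset.prod_congr rfl
      intro x hx
      rw [hsymm_ne b false t x (fun h => ha (h ▸ hx))]
    -- now compare
    show (∑ r : α → Bool, f r * ((∏ x ∈ s, bern (r x)) * Zs s r)) ≤
      ∑ r : α → Bool, f r * ((∏ x ∈ insert a s, bern (r x)) * Zs (insert a s) r)
    rw [← Equiv.sum_comp e.symm (fun r => f r * ((∏ x ∈ s, bern (r x)) * Zs s r)),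
      ← Equiv.sum_comp e.symm
        (fun r => f r * ((∏ x ∈ insert a s, bern (r x)) * Zs (insert a s) r)),
      Fintype.sum_prod_type, Fintype.sum_prod_type, Fintype.sum_bool, Fintype.sum_bool,
      ← Finset.sum_add_distrib, ← Finset.sum_add_distrib]
    apply Finset.sum_le_sum
    intro t _
    rw [Finset.prod_insert ha, Finset.prod_insert ha, hZinsert, hZinsert,
      hprod true t, hsymm_a, hsymm_a]
    rw [show bern true = p from rfl, show bern false = 1 - p from rfl]
    set g0 := f (e.symm (false, t)) with hg0
    set g1 := f (e.symm (true, t)) with hg1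
    set q0 := Zs s (e.symm (false, t)) with hq0
    set q1 := Zs s (e.symm (true, t)) with hq1
    set P := ∏ x ∈ s, bern (e.symm (false, t) x) with hP
    have hPn : 0 ≤ P := Finset.prod_nonneg fun x _ => hbern0 _
    have hg01 : g0 ≤ g1 := by
      apply hfmono
      intro x hx
      by_cases hxa : x = a
      · subst hxa; rw [hsymm_a]
      · rw [← hsymm_ne false true t x hxa]; exact hx
    have hoddst : (1 - p) * q1 ≤ p * q0 := by
      rw [hq0, hq1, hZsplit, hZsplit, Finset.mul_sum, Finset.mul_sum]
      apply Finset.sum_le_sum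
      intro v _
      by_cases hc : cond' v t
      · rw [if_pos hc, if_pos hc]
        have := hodds a (e.symm (false, v))
        rw [hupd, hupd] at this
        exact this
      · rw [if_neg hc, if_neg hc, mul_zero, mul_zero]
    have hq0n : 0 ≤ q0 := hZsnonneg _ _
    have hq1n : 0 ≤ q1 := hZsnonneg _ _
    have hg0n : 0 ≤ g0 := hf0 _
    nlinarith [mul_nonneg (mul_nonneg hPn (sub_nonneg.mpr hg01)) (sub_nonneg.mpr hoddst)]
  -- induction
  have hmain : ∀ s : Finset α, H ∅ ≤ H s := by
    intro s
    induction s using Finset.induction_on with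
    | empty => exact le_rfl
    | insert _ _ ha ih => exact ih.trans (hstep _ _ ha)
  have := hmain Finset.univ
  rw [hH0, hHU] at this
  exact this
-- === analytic helpers ===

lemma angleMeasure_univ (ι : Type*) [Fintype ι] :
    angleMeasure ι Set.univ = ∏ _i : ι, ENNReal.ofReal (2 * π) := by
  rw [angleMeasure, Measure.restrict_apply_univ, volume_pi_pi]
  simp [Real.volume_Ico]

lemma angleMeasure_finite (ι : Type*) [Fintype ι] : IsFiniteMeasure (angleMeasure ι) := by
  constructor
  rw [angleMeasure_univ]
  exact ENNReal.prod_lt_top fun _ _ => ENNReal.ofReal_lt_top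

lemma angleMeasure_univ_toReal_pos (ι : Type*) [Fintype ι] :
    0 < (angleMeasure ι Set.univ).toReal := by
  rw [angleMeasure_univ, ENNReal.toReal_prod]
  apply Finset.prod_pos
  intro i _
  rw [ENNReal.toReal_ofReal Real.two_pi_pos.le]
  exact Real.two_pi_pos

lemma extFun_continuous {V : Type*} [DecidableEq V] (Λ : Finset V) (v : V) :
    Continuous fun θ : ↑Λ → ℝ => extFun Λ θ v := by
  unfold extFun
  by_cases h : v ∈ Λ
  · simp only [dif_pos h]
    exact continuous_apply _
  · simp only [dif_neg h]
    exact continuous_const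

lemma xyEnergy_cont (d n : ℕ) (Λ : Finset (ExtVertex d n))
    (J : ExtVertex d n → ExtVertex d n → ℝ) (ρ : ExtVertex d n → ℝ) :
    Continuous fun θ : ↑Λ → ℝ => xyEnergy d n Λ J ρ (extFun Λ θ) := by
  unfold xyEnergy
  apply Continuous.mul continuous_const
  apply continuous_finset_sum
  intro u _
  apply continuous_finset_sum
  intro w _
  by_cases h : extAdj d n u w
  · simp only [if_pos h]
    exact continuous_const.mul (Real.continuous_cos.comp ((extFun_continuous Λ u).sub (extFun_continuous Λ w)))
  · simp only [if_neg h]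
    exact continuous_const

lemma xyEnergy_abs_le (d n : ℕ) (Λ : Finset (ExtVertex d n))
    (J : ExtVertex d n → ExtVertex d n → ℝ) (ρ : ExtVertex d n → ℝ) (θ : ExtVertex d n → ℝ) :
    |xyEnergy d n Λ J ρ θ| ≤ (1 / 2) * ∑ u ∈ Λ, ∑ w ∈ Λ, |ρ u * ρ w * J u w| := by
  classical
  unfold xyEnergy
  rw [abs_mul]
  rw [show |((1 : ℝ) / 2)| = 1 / 2 by norm_num]
  apply mul_le_mul_of_nonneg_left _ (by norm_num)
  calc |∑ u ∈ Λ, ∑ w ∈ Λ, if extAdj d n u w then ρ u * ρ w * J u w * Real.cos (θ u - θ w) else 0|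
      ≤ ∑ u ∈ Λ, |∑ w ∈ Λ, if extAdj d n u w then ρ u * ρ w * J u w * Real.cos (θ u - θ w) else 0| :=
        Finset.abs_sum_le_sum_abs _ _
    _ ≤ ∑ u ∈ Λ, ∑ w ∈ Λ, |ρ u * ρ w * J u w| := by
        apply Finset.sum_le_sum
        intro u _
        calc |∑ w ∈ Λ, if extAdj d n u w then ρ u * ρ w * J u w * Real.cos (θ u - θ w) else 0|
            ≤ ∑ w ∈ Λ, |if extAdj d n u w then ρ u * ρ w * J u w * Real.cos (θ u - θ w) else 0| :=
              Finset.abs_sum_le_sum_abs _ _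
          _ ≤ ∑ w ∈ Λ, |ρ u * ρ w * J u w| := by
              apply Finset.sum_le_sum
              intro w _
              by_cases h : extAdj d n u w
              · rw [if_pos h, abs_mul]
                calc |ρ u * ρ w * J u w| * |Real.cos (θ u - θ w)| ≤ |ρ u * ρ w * J u w| * 1 := by
                      apply mul_le_mul_of_nonneg_left (abs_cos_le_one _) (abs_nonneg _)
                  _ = |ρ u * ρ w * J u w| := mul_one _
              · rw [if_neg h, abs_zero]
                exact abs_nonneg _

lemma xyExp_integrable (d n : ℕ) (Λ : Finset (ExtVertex d n))
    (J : ExtVertex d n → ExtVertex d n → ℝ) (ρ : ExtVertex d n → ℝ) :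
    Integrable (fun θ : ↑Λ → ℝ => Real.exp (xyEnergy d n Λ J ρ (extFun Λ θ)))
      (angleMeasure ↑Λ) := by
  haveI : IsFiniteMeasure (angleMeasure (↑Λ : Type _)) := angleMeasure_finite _
  set C : ℝ := (1 / 2) * ∑ u ∈ Λ, ∑ w ∈ Λ, |ρ u * ρ w * J u w| with hC
  apply Integrable.mono' (integrable_const (Real.exp C))
  · exact (Real.continuous_exp.comp (xyEnergy_cont d n Λ J ρ)).aestronglyMeasurable
  · filter_upwards with θ
    rw [Real.norm_eq_abs, abs_of_pos (Real.exp_pos _)]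
    apply Real.exp_le_exp.mpr
    exact (le_abs_self _).trans (xyEnergy_abs_le d n Λ J ρ _)

lemma xyZ_pos (d n : ℕ) (Λ : Finset (ExtVertex d n))
    (J : ExtVertex d n → ExtVertex d n → ℝ) (ρ : ExtVertex d n → ℝ) :
    0 < xyZ d n Λ J ρ := by
  haveI : IsFiniteMeasure (angleMeasure (↑Λ : Type _)) := angleMeasure_finite _
  unfold xyZ
  set C : ℝ := (1 / 2) * ∑ u ∈ Λ, ∑ w ∈ Λ, |ρ u * ρ w * J u w| with hC
  have h1 : ∫ _θ : ↑Λ → ℝ, Real.exp (-C) ∂(angleMeasure ↑Λ) ≤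
      ∫ θ : ↑Λ → ℝ, Real.exp (xyEnergy d n Λ J ρ (extFun Λ θ)) ∂(angleMeasure ↑Λ) := by
    apply integral_mono (integrable_const _) (xyExp_integrable d n Λ J ρ)
    intro θ
    apply Real.exp_le_exp.mpr
    have := xyEnergy_abs_le d n Λ J ρ (extFun Λ θ)
    rw [abs_le] at this
    exact this.1
  have h2 : (0 : ℝ) < ∫ _θ : ↑Λ → ℝ, Real.exp (-C) ∂(angleMeasure ↑Λ) := by
    rw [integral_const, smul_eq_mul]
    exact mul_pos (angleMeasure_univ_toReal_pos _) (Real.exp_pos _)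
  linarith

-- === adjacency helpers ===

lemma extAdj_inl_inl {d n : ℕ} (x y : Vertex d) :
    extAdj d n (Sum.inl x) (Sum.inl y) ↔ (n = 1 ∧ (∑ i, |y i - x i|) = 1) := Iff.rfl

lemma extAdj_inl_inr {d n : ℕ} (x y : Vertex d) (i : Fin d) (t : Fin (n - 1)) :
    extAdj d n (Sum.inl x) (Sum.inr (y, i, t)) ↔
      ((x = y ∧ (t : ℕ) = 0) ∨ (x = y + unitVec d i ∧ (t : ℕ) = n - 2)) := Iff.rfl

lemma extAdj_inr_inl {d n : ℕ} (x y : Vertex d) (i : Fin d) (t : Fin (n - 1)) :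
    extAdj d n (Sum.inr (y, i, t)) (Sum.inl x) ↔
      ((x = y ∧ (t : ℕ) = 0) ∨ (x = y + unitVec d i ∧ (t : ℕ) = n - 2)) := Iff.rfl

lemma extAdj_inl_symm {d n : ℕ} (u : ExtVertex d n) (X : Vertex d) :
    extAdj d n u (Sum.inl X) ↔ extAdj d n (Sum.inl X) u := by
  cases u with
  | inl z =>
    rw [extAdj_inl_inl, extAdj_inl_inl]
    constructor <;>
    · rintro ⟨h1, h2⟩
      refine ⟨h1, ?_⟩
      rw [← h2]
      exact Finset.sum_congr rfl fun i _ => abs_sub_comm _ _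
  | inr q =>
    obtain ⟨y, i, t⟩ := q
    rw [extAdj_inr_inl, extAdj_inl_inr]

lemma add_unitVec_ne {d : ℕ} (x : Vertex d) (i : Fin d) : x ≠ x + unitVec d i := by
  intro h
  have := congrFun h i
  simp [unitVec] at this

open Classical in
lemma count_single {d n : ℕ} (hd : 1 ≤ d) (hn : 2 ≤ n) {β₁ : ℝ} (hβ : 0 ≤ β₁)
    (Λ : Finset (ExtVertex d n)) (X : Vertex d) :
    ∑ w ∈ Λ, (if extAdj d n (Sum.inl X) w then β₁ else 0) ≤ 2 * d * β₁ := by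
  classical
  rw [Finset.sum_ite, Finset.sum_const, Finset.sum_const_zero, add_zero]
  set ψ : ExtVertex d n → Fin d × Bool :=
    Sum.elim (fun _ => ((⟨0, hd⟩ : Fin d), true)) (fun q => (q.2.1, decide (q.1 = X))) with hψ
  have hinj : Set.InjOn ψ ↑(Λ.filter fun w => extAdj d n (Sum.inl X) w) := by
    intro w hw w' hw' heq
    simp only [Finset.coe_filter, Set.mem_setOf_eq] at hw hw'
    obtain ⟨-, hadj⟩ := hw
    obtain ⟨-, hadj'⟩ := hw'
    cases w with
    | inl z => exact absurd ((extAdj_inl_inl X z).mp hadj).1 (by omega)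
    | inr q =>
      cases w' with
      | inl z => exact absurd ((extAdj_inl_inl X z).mp hadj').1 (by omega)
      | inr q' =>
        obtain ⟨y, i, t⟩ := q
        obtain ⟨y', i', t'⟩ := q'
        rw [extAdj_inl_inr] at hadj hadj'
        simp only [hψ, Sum.elim_inr] at heq
        rw [Prod.mk.injEq] at heq
        obtain ⟨hi, hb⟩ := heq
        subst hi
        by_cases hy : y = X
        · have hy' : y' = X := by
            rw [hy] at hb
            simp only [decide_eq_true_eq] at hb
            simpa using hb.symm
          have hyy : y = y' := hy.trans hy'.symm
          subst hyy
          have ht : (t : ℕ) = 0 := by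
            rcases hadj with ⟨-, h⟩ | ⟨h, -⟩
            · exact h
            · rw [hy] at h
              exact absurd h (add_unitVec_ne X i)
          have ht' : (t' : ℕ) = 0 := by
            rcases hadj' with ⟨-, h⟩ | ⟨h, -⟩
            · exact h
            · rw [hy] at h
              exact absurd h (add_unitVec_ne X i)
          rw [Fin.ext (ht.trans ht'.symm)]
        · have hy' : y' ≠ X := by
            intro h
            rw [h] at hb
            simp only [decide_eq_true_eq] at hb
            exact hy (by simpa using hb)
          rcases hadj with ⟨h, -⟩ | ⟨h1, h2⟩
          · exact absurd h.symm hy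
          rcases hadj' with ⟨h, -⟩ | ⟨h1', h2'⟩
          · exact absurd h.symm hy'
          have hyy : y = y' := by
            have : y + unitVec d i = y' + unitVec d i := by rw [← h1, ← h1']
            exact add_right_cancel this
          subst hyy
          rw [Fin.ext (h2.trans h2'.symm)]
  have hcard : (Λ.filter fun w => extAdj d n (Sum.inl X) w).card ≤ 2 * d := by
    have := Finset.card_le_card_of_injOn ψ (fun _ _ => Finset.mem_univ _) hinj
    rw [Finset.card_univ, Fintype.card_prod, Fintype.card_fin, Fintype.card_bool] at this
    omega
  calc ((Λ.filter fun w => extAdj d n (Sum.inl X) w).card : ℕ) • β₁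
      = ((Λ.filter fun w => extAdj d n (Sum.inl X) w).card : ℝ) * β₁ := nsmul_eq_mul _ _
    _ ≤ (2 * d : ℝ) * β₁ := by
        apply mul_le_mul_of_nonneg_right _ hβ
        exact_mod_cast hcard

lemma ite_le_ite {β₁ : ℝ} (hβ : 0 ≤ β₁) (P Q : Prop) [Decidable P] [Decidable Q] (h : P → Q) :
    (if P then β₁ else 0) ≤ (if Q then β₁ else 0) := by
  split_ifs with h1 h2
  · exact le_rfl
  · exact absurd (h h1) h2
  · exact hβ
  · exact le_rfl

open Classical in
lemma double_bound {d n : ℕ} (hd : 1 ≤ d) (hn : 2 ≤ n) {β₁ : ℝ} (hβ : 0 ≤ β₁)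
    (Λ : Finset (ExtVertex d n)) (X : Vertex d) :
    ∑ u ∈ Λ, ∑ w ∈ Λ,
      (if extAdj d n u w ∧ (u = Sum.inl X ∨ w = Sum.inl X) then β₁ else 0) ≤
      4 * d * β₁ := by
  classical
  have step1 : ∑ u ∈ Λ, ∑ w ∈ Λ,
      (if extAdj d n u w ∧ (u = Sum.inl X ∨ w = Sum.inl X) then β₁ else 0) ≤
      (∑ u ∈ Λ, ∑ w ∈ Λ, (if extAdj d n u w ∧ u = Sum.inl X then β₁ else 0)) +
      ∑ u ∈ Λ, ∑ w ∈ Λ, (if extAdj d n u w ∧ w = Sum.inl X then β₁ else 0) := by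
    rw [← Finset.sum_add_distrib]
    apply Finset.sum_le_sum
    intro u _
    rw [← Finset.sum_add_distrib]
    apply Finset.sum_le_sum
    intro w _
    by_cases h : extAdj d n u w ∧ (u = Sum.inl X ∨ w = Sum.inl X)
    · rw [if_pos h]
      rcases h.2 with h2 | h2
      · have : (if extAdj d n u w ∧ u = Sum.inl X then β₁ else 0) = β₁ := if_pos ⟨h.1, h2⟩
        rw [this]
        have : (0:ℝ) ≤ if extAdj d n u w ∧ w = Sum.inl X then β₁ else 0 := by
          split_ifs <;> simp [hβ]
        linarith
      · have : (if extAdj d n u w ∧ w = Sum.inl X then β₁ else 0) = β₁ := if_pos ⟨h.1, h2⟩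
        rw [this]
        have : (0:ℝ) ≤ if extAdj d n u w ∧ u = Sum.inl X then β₁ else 0 := by
          split_ifs <;> simp [hβ]
        linarith
    · rw [if_neg h]
      have h1 : (0:ℝ) ≤ if extAdj d n u w ∧ u = Sum.inl X then β₁ else 0 := by
        split_ifs <;> simp [hβ]
      have h2 : (0:ℝ) ≤ if extAdj d n u w ∧ w = Sum.inl X then β₁ else 0 := by
        split_ifs <;> simp [hβ]
      linarith
  have hS1 : (∑ u ∈ Λ, ∑ w ∈ Λ, (if extAdj d n u w ∧ u = Sum.inl X then β₁ else 0)) ≤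
      2 * d * β₁ := by
    have inner : ∀ u ∈ Λ, (∑ w ∈ Λ, (if extAdj d n u w ∧ u = Sum.inl X then β₁ else 0)) ≤
        (if u = Sum.inl X then 2 * d * β₁ else 0) := by
      intro u _
      by_cases hu : u = Sum.inl X
      · rw [if_pos hu]
        subst hu
        refine le_trans (Finset.sum_le_sum fun w _ => ite_le_ite hβ _ _ And.left)
          (count_single hd hn hβ Λ X)
      · rw [if_neg hu]
        have : ∀ w ∈ Λ, (if extAdj d n u w ∧ u = Sum.inl X then β₁ else 0) = 0 := by
          intro w _
          exact if_neg fun hc => hu hc.2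
        rw [Finset.sum_congr rfl this, Finset.sum_const_zero]
    calc (∑ u ∈ Λ, ∑ w ∈ Λ, (if extAdj d n u w ∧ u = Sum.inl X then β₁ else 0))
        ≤ ∑ u ∈ Λ, (if u = Sum.inl X then 2 * d * β₁ else 0) := Finset.sum_le_sum inner
      _ = (if Sum.inl X ∈ Λ then 2 * d * β₁ else 0) := Finset.sum_ite_eq' Λ _ _
      _ ≤ 2 * d * β₁ := by
          split_ifs
          · exact le_rfl
          · positivity
  have hS2 : (∑ u ∈ Λ, ∑ w ∈ Λ, (if extAdj d n u w ∧ w = Sum.inl X then β₁ else 0)) ≤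
      2 * d * β₁ := by
    have inner : ∀ u ∈ Λ, (∑ w ∈ Λ, (if extAdj d n u w ∧ w = Sum.inl X then β₁ else 0)) ≤
        (if extAdj d n (Sum.inl X) u then β₁ else 0) := by
      intro u _
      have hrw : ∀ w ∈ Λ, (if extAdj d n u w ∧ w = Sum.inl X then β₁ else 0) =
          (if w = Sum.inl X then (if extAdj d n u w then β₁ else 0) else 0) := by
        intro w _
        by_cases hw : w = Sum.inl X
        · rw [if_pos hw]
          by_cases ha : extAdj d n u w
          · rw [if_pos ⟨ha, hw⟩, if_pos ha]
          · rw [if_neg fun hc => ha hc.1, if_neg ha]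
        · rw [if_neg fun hc => hw hc.2, if_neg hw]
      rw [Finset.sum_congr rfl hrw, Finset.sum_ite_eq' Λ _ _]
      by_cases hm : Sum.inl X ∈ Λ
      · rw [if_pos hm]
        exact ite_le_ite hβ _ _ (extAdj_inl_symm u X).mp
      · rw [if_neg hm]
        split_ifs
        · exact hβ
        · exact le_rfl
    calc (∑ u ∈ Λ, ∑ w ∈ Λ, (if extAdj d n u w ∧ w = Sum.inl X then β₁ else 0))
        ≤ ∑ u ∈ Λ, (if extAdj d n (Sum.inl X) u then β₁ else 0) := Finset.sum_le_sum inner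
      _ ≤ 2 * d * β₁ := count_single hd hn hβ Λ X
  calc ∑ u ∈ Λ, ∑ w ∈ Λ,
        (if extAdj d n u w ∧ (u = Sum.inl X ∨ w = Sum.inl X) then β₁ else 0)
      ≤ _ + _ := step1
    _ ≤ 2 * d * β₁ + 2 * d * β₁ := add_le_add hS1 hS2
    _ = 4 * d * β₁ := by ring

-- === site-weight and coupling helpers ===

lemma boxSiteVal_nonneg {d n L : ℕ} (r : ↑(box d L) → Bool) (u : ExtVertex d n) :
    0 ≤ boxSiteVal d n L r u := by
  cases u with
  | inl z =>
    show (0:ℝ) ≤ if h : z ∈ box d L then (if r ⟨z, h⟩ then 1 else 0) else 1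
    split_ifs <;> norm_num
  | inr q => exact zero_le_one

lemma boxSiteVal_le_one {d n L : ℕ} (r : ↑(box d L) → Bool) (u : ExtVertex d n) :
    boxSiteVal d n L r u ≤ 1 := by
  cases u with
  | inl z =>
    show (if h : z ∈ box d L then (if r ⟨z, h⟩ then (1:ℝ) else 0) else 1) ≤ 1
    split_ifs <;> norm_num
  | inr q => exact le_rfl

lemma boxSiteVal_update_self {d n L : ℕ} (r : ↑(box d L) → Bool) (x : ↑(box d L)) (b : Bool) :
    boxSiteVal d n L (Function.update r x b) (Sum.inl x.1) = if b then 1 else 0 := by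
  show (if h : x.1 ∈ box d L then (if Function.update r x b ⟨x.1, h⟩ then (1:ℝ) else 0) else 1) = _
  rw [dif_pos x.2]
  congr 1
  rw [show (⟨x.1, x.2⟩ : ↑(box d L)) = x from rfl, Function.update_self]

lemma boxSiteVal_update_ne {d n L : ℕ} (r : ↑(box d L) → Bool) (x : ↑(box d L)) (b b' : Bool)
    (w : ExtVertex d n) (hw : w ≠ Sum.inl x.1) :
    boxSiteVal d n L (Function.update r x b) w = boxSiteVal d n L (Function.update r x b') w := by
  cases w with
  | inr q => rfl
  | inl z =>
    have hz : z ≠ x.1 := fun h => hw (by rw [h])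
    show (if h : z ∈ box d L then (if Function.update r x b ⟨z, h⟩ then (1:ℝ) else 0) else 1) =
      (if h : z ∈ box d L then (if Function.update r x b' ⟨z, h⟩ then (1:ℝ) else 0) else 1)
    by_cases h : z ∈ box d L
    · rw [dif_pos h, dif_pos h, Function.update_of_ne (fun hc => hz (congrArg Subtype.val hc)),
        Function.update_of_ne (fun hc => hz (congrArg Subtype.val hc))]
    · rw [dif_neg h, dif_neg h]

lemma mixedJ_inl_left {d n : ℕ} (β₁ β₂ : ℝ) (z : Vertex d) (w : ExtVertex d n) :
    mixedJ d n β₁ β₂ (Sum.inl z) w = β₁ := by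
  cases w <;> rfl

lemma mixedJ_inl_right {d n : ℕ} (β₁ β₂ : ℝ) (z : Vertex d) (u : ExtVertex d n) :
    mixedJ d n β₁ β₂ u (Sum.inl z) = β₁ := by
  cases u <;> rfl

lemma energy_compare {d n L : ℕ} (hd : 1 ≤ d) (hn : 2 ≤ n) {β₁ β₂ : ℝ} (hβ : 0 ≤ β₁)
    (Λ : Finset (ExtVertex d n)) (r : ↑(box d L) → Bool) (x : ↑(box d L))
    (θ : ExtVertex d n → ℝ) :
    xyEnergy d n Λ (mixedJ d n β₁ β₂) (boxSiteVal d n L (Function.update r x true)) θ ≤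
      2 * d * β₁ +
      xyEnergy d n Λ (mixedJ d n β₁ β₂) (boxSiteVal d n L (Function.update r x false)) θ := by
  classical
  set X : Vertex d := x.1 with hX
  set ρ₁ : ExtVertex d n → ℝ := boxSiteVal d n L (Function.update r x true) with hρ₁
  set ρ₀ : ExtVertex d n → ℝ := boxSiteVal d n L (Function.update r x false) with hρ₀
  set J : ExtVertex d n → ExtVertex d n → ℝ := mixedJ d n β₁ β₂ with hJ
  have key : ∀ u ∈ Λ, ∀ w ∈ Λ,
      (if extAdj d n u w then ρ₁ u * ρ₁ w * J u w * Real.cos (θ u - θ w) else 0) -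
      (if extAdj d n u w then ρ₀ u * ρ₀ w * J u w * Real.cos (θ u - θ w) else 0) ≤
      (if extAdj d n u w ∧ (u = Sum.inl X ∨ w = Sum.inl X) then β₁ else 0) := by
    intro u _ w _
    by_cases hadj : extAdj d n u w
    · rw [if_pos hadj, if_pos hadj]
      by_cases hu : u = Sum.inl X
      · rw [if_pos ⟨hadj, Or.inl hu⟩]
        subst hu
        have h0 : ρ₀ (Sum.inl X) = 0 := by
          rw [hρ₀, hX, boxSiteVal_update_self]
          rfl
        have h1 : ρ₁ (Sum.inl X) = 1 := by
          rw [hρ₁, hX, boxSiteVal_update_self]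
          rfl
        have hJβ : J (Sum.inl X) w = β₁ := mixedJ_inl_left β₁ β₂ X w
        rw [h0, h1, hJβ]
        have hw0 : 0 ≤ ρ₁ w := boxSiteVal_nonneg _ _
        have hw1 : ρ₁ w ≤ 1 := boxSiteVal_le_one _ _
        have hc1 : Real.cos (θ (Sum.inl X) - θ w) ≤ 1 := Real.cos_le_one _
        have hc2 : -1 ≤ Real.cos (θ (Sum.inl X) - θ w) := Real.neg_one_le_cos _
        nlinarith [mul_nonneg hw0 hβ, mul_le_mul_of_nonneg_right hw1 hβ]
      · by_cases hw : w = Sum.inl X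
        · rw [if_pos ⟨hadj, Or.inr hw⟩]
          subst hw
          have h0 : ρ₀ (Sum.inl X) = 0 := by
            rw [hρ₀, hX, boxSiteVal_update_self]
            rfl
          have h1 : ρ₁ (Sum.inl X) = 1 := by
            rw [hρ₁, hX, boxSiteVal_update_self]
            rfl
          have hJβ : J u (Sum.inl X) = β₁ := mixedJ_inl_right β₁ β₂ X u
          have hueq : ρ₁ u = ρ₀ u := by
            rw [hρ₁, hρ₀, hX] at *
            exact boxSiteVal_update_ne r x true false u hu
          rw [h0, h1, hJβ, hueq]
          have hu0 : 0 ≤ ρ₀ u := boxSiteVal_nonneg _ _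
          have hu1 : ρ₀ u ≤ 1 := boxSiteVal_le_one _ _
          have hc1 : Real.cos (θ u - θ (Sum.inl X)) ≤ 1 := Real.cos_le_one _
          have hc2 : -1 ≤ Real.cos (θ u - θ (Sum.inl X)) := Real.neg_one_le_cos _
          nlinarith [mul_nonneg hu0 hβ, mul_le_mul_of_nonneg_right hu1 hβ]
        · rw [if_neg (fun hc => hc.2.elim hu hw)]
          have hueq : ρ₁ u = ρ₀ u := boxSiteVal_update_ne r x true false u hu
          have hweq : ρ₁ w = ρ₀ w := boxSiteVal_update_ne r x true false w hw
          rw [hueq, hweq]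
          simp
    · rw [if_neg hadj, if_neg hadj, if_neg (fun hc => hadj hc.1)]
      simp
  have hsum : (∑ u ∈ Λ, ∑ w ∈ Λ,
        (if extAdj d n u w then ρ₁ u * ρ₁ w * J u w * Real.cos (θ u - θ w) else 0)) -
      (∑ u ∈ Λ, ∑ w ∈ Λ,
        (if extAdj d n u w then ρ₀ u * ρ₀ w * J u w * Real.cos (θ u - θ w) else 0)) ≤
      4 * d * β₁ := by
    rw [← Finset.sum_sub_distrib]
    calc ∑ u ∈ Λ, ((∑ w ∈ Λ, (if extAdj d n u w then ρ₁ u * ρ₁ w * J u w * Real.cos (θ u - θ w) else 0)) -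
          ∑ w ∈ Λ, (if extAdj d n u w then ρ₀ u * ρ₀ w * J u w * Real.cos (θ u - θ w) else 0))
        = ∑ u ∈ Λ, ∑ w ∈ Λ,
          ((if extAdj d n u w then ρ₁ u * ρ₁ w * J u w * Real.cos (θ u - θ w) else 0) -
           (if extAdj d n u w then ρ₀ u * ρ₀ w * J u w * Real.cos (θ u - θ w) else 0)) := by
          apply Finset.sum_congr rfl
          intro u _
          rw [Finset.sum_sub_distrib]
      _ ≤ ∑ u ∈ Λ, ∑ w ∈ Λ,
          (if extAdj d n u w ∧ (u = Sum.inl X ∨ w = Sum.inl X) then β₁ else 0) := by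
          apply Finset.sum_le_sum
          intro u hu
          exact Finset.sum_le_sum fun w hw => key u hu w hw
      _ ≤ 4 * d * β₁ := double_bound hd hn hβ Λ X
  show (1/2 : ℝ) * _ ≤ 2 * d * β₁ + (1/2 : ℝ) * _
  linarith

lemma wellsZ_ratio {d n L : ℕ} (hd : 1 ≤ d) (hn : 2 ≤ n) {β₁ β₂ : ℝ} (hβ : 0 ≤ β₁)
    (r : ↑(box d L) → Bool) (x : ↑(box d L)) :
    wellsZ d n L β₁ β₂ (Function.update r x true) ≤
      Real.exp (2 * d * β₁) * wellsZ d n L β₁ β₂ (Function.update r x false) := by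
  unfold wellsZ xyZ
  set Λ := extBox d n L with hΛ
  have h0 := xyExp_integrable d n Λ (mixedJ d n β₁ β₂) (boxSiteVal d n L (Function.update r x false))
  have h1 := xyExp_integrable d n Λ (mixedJ d n β₁ β₂) (boxSiteVal d n L (Function.update r x true))
  calc ∫ θ : ↑Λ → ℝ, Real.exp (xyEnergy d n Λ (mixedJ d n β₁ β₂)
          (boxSiteVal d n L (Function.update r x true)) (extFun Λ θ)) ∂(angleMeasure ↑Λ)
      ≤ ∫ θ : ↑Λ → ℝ, Real.exp (2 * d * β₁) * Real.exp (xyEnergy d n Λ (mixedJ d n β₁ β₂)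
          (boxSiteVal d n L (Function.update r x false)) (extFun Λ θ)) ∂(angleMeasure ↑Λ) := by
        apply integral_mono h1 (h0.const_mul _)
        intro θ
        show Real.exp _ ≤ Real.exp (2 * d * β₁) * Real.exp _
        rw [← Real.exp_add]
        exact Real.exp_le_exp.mpr (energy_compare hd hn hβ Λ r x (extFun Λ θ))
    _ = Real.exp (2 * d * β₁) * ∫ θ : ↑Λ → ℝ, Real.exp (xyEnergy d n Λ (mixedJ d n β₁ β₂)
          (boxSiteVal d n L (Function.update r x false)) (extFun Λ θ)) ∂(angleMeasure ↑Λ) :=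
        integral_const_mul _ _

/-- **Theorem (Statement 11, stochastic domination of the Wells disorder).** For
`d ≥ 2`, `β₁ > 0` and `p₀(β₁) = 1/(1 + e^{−2dβ₁})`: for every `L ≥ 1`, `n ≥ 2`,
`β₂ > 0`, the Wells disorder `ν_{L,n,β₁,β₂}` is stochastically dominated by the
product Bernoulli(p₀(β₁)) measure on `{0,1}^{Λ_L}`. -/
theorem wells_disorder_stochastic_domination
    (d : ℕ) (hd : 2 ≤ d) (β₁ : ℝ) (hβ₁ : 0 < β₁)
    (L n : ℕ) (hL : 1 ≤ L) (hn : 2 ≤ n) (β₂ : ℝ) (hβ₂ : 0 < β₂)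
    (f : (↑(box d L) → Bool) → ℝ) (hf0 : ∀ r, 0 ≤ f r)
    (hfmono : ∀ r r' : ↑(box d L) → Bool, (∀ x, r x = true → r' x = true) → f r ≤ f r') :
    ∑ r : ↑(box d L) → Bool, f r * wellsNu d n L β₁ β₂ r ≤
      ∑ r : ↑(box d L) → Bool, f r *
        ∏ x : ↑(box d L),
          (if r x then 1 / (1 + Real.exp (-(2 * d * β₁)))
           else 1 - 1 / (1 + Real.exp (-(2 * d * β₁)))) := by
  classical
  set A : ℝ := 2 * d * β₁ with hA
  set p : ℝ := 1 / (1 + Real.exp (-A)) with hp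
  have hexp : 0 < Real.exp (-A) := Real.exp_pos _
  have h1e : (0:ℝ) < 1 + Real.exp (-A) := by linarith
  have hp0 : 0 ≤ p := by positivity
  have hp1 : p ≤ 1 := by
    rw [hp, div_le_one h1e]
    linarith
  have hZpos : ∀ r : ↑(box d L) → Bool, 0 < wellsZ d n L β₁ β₂ r :=
    fun r => xyZ_pos d n (extBox d n L) (mixedJ d n β₁ β₂) (boxSiteVal d n L r)
  have hS : 0 < ∑ r' : ↑(box d L) → Bool, wellsZ d n L β₁ β₂ r' :=
    Finset.sum_pos (fun i _ => hZpos i) Finset.univ_nonempty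
  have hkey : (1 - p) * Real.exp A = p := by
    have he : Real.exp (-A) * Real.exp A = 1 := by
      rw [← Real.exp_add]
      simp
    rw [hp]
    field_simp
    linear_combination he
  have hodds : ∀ (a : ↑(box d L)) (r : ↑(box d L) → Bool),
      (1 - p) * wellsZ d n L β₁ β₂ (Function.update r a true) ≤
        p * wellsZ d n L β₁ β₂ (Function.update r a false) := by
    intro a r
    have hratio := wellsZ_ratio (d := d) (n := n) (L := L) (β₂ := β₂) (by omega) hn hβ₁.le r a
    calc (1 - p) * wellsZ d n L β₁ β₂ (Function.update r a true)
        ≤ (1 - p) * (Real.exp A * wellsZ d n L β₁ β₂ (Function.update r a false)) := by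
          apply mul_le_mul_of_nonneg_left _ (by linarith)
          exact hratio
      _ = ((1 - p) * Real.exp A) * wellsZ d n L β₁ β₂ (Function.update r a false) := by ring
      _ = p * wellsZ d n L β₁ β₂ (Function.update r a false) := by rw [hkey]
  have hdom := berDom p hp0 hp1 (wellsZ d n L β₁ β₂) (fun r => (hZpos r).le) hodds f hf0 hfmono
  have hgoal : ∑ r : ↑(box d L) → Bool, f r * wellsNu d n L β₁ β₂ r =
      (∑ r : ↑(box d L) → Bool, f r * wellsZ d n L β₁ β₂ r) /
        (∑ r' : ↑(box d L) → Bool, wellsZ d n L β₁ β₂ r') := by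
    rw [Finset.sum_div]
    apply Finset.sum_congr rfl
    intro r _
    simp only [wellsNu, mul_div_assoc]
  rw [hgoal, div_le_iff₀ hS]
  exact hdom.trans_eq (mul_comm _ _)

end
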